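/- In 𝔽₂₃, let A₃ = {(a,0,0,0,0) : a ∈ ℝ} ∪ {(t, t, −t²/2, t³/6, t³/3) : t > 0} (the exponential image of the set W₃ = ℝX₁ ∪ ℝ₊(X₁+X₂)), and let S₃ be the subsemigroup of (ℝ⁵, ∗) generated by A₃. Then the point (0,1,0,0,0) (which is exp(X₂)) belongs to the topological closure of S₃ but does not belong to S₃ itself; in particular, for every k ∈ ℕ the set of products of at most k elements of A₃ is a proper subset of S₃'s closure that misses (0,1,0,0,0). -/

import Mathlib

/-- The group operation of the free Carnot group `𝔽₂₃` of rank 2 and step 3, in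
exponential coordinates of the second kind on `ℝ⁵`. -/
noncomputable def F23mul (x y : Fin 5 → ℝ) : Fin 5 → ℝ :=
  ![x 0 + y 0,
    x 1 + y 1,
    x 2 + y 2 - x 0 * y 1,
    x 3 + y 3 - x 0 * y 2 + x 0 ^ 2 * y 1 / 2,
    x 4 + y 4 + x 0 * x 1 * y 1 + x 0 * y 1 ^ 2 / 2 - x 1 * y 2]

/-- The smallest subset of `α` containing `A` and closed under `mul`
(the subsemigroup generated by `A`). -/
def genSemigroup {α : Type*} (mul : α → α → α) (A : Set α) : Set α :=
  ⋂₀ {S : Set α | A ⊆ S ∧ ∀ x ∈ S, ∀ y ∈ S, mul x y ∈ S}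

/-- The exponential image of the set `W₃ = ℝX₁ ∪ ℝ₊(X₁+X₂)`. -/
noncomputable def A3 : Set (Fin 5 → ℝ) :=
  {p | ∃ a : ℝ, p = ![a, 0, 0, 0, 0]} ∪
  {p | ∃ t : ℝ, 0 < t ∧ p = ![t, t, -(t ^ 2) / 2, t ^ 3 / 6, t ^ 3 / 3]}

lemma A3_subset_gen : A3 ⊆ genSemigroup F23mul A3 := fun _ hx _ hS => hS.1 hx

lemma gen_mul_mem {x y : Fin 5 → ℝ} (hx : x ∈ genSemigroup F23mul A3)
    (hy : y ∈ genSemigroup F23mul A3) : F23mul x y ∈ genSemigroup F23mul A3 :=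
  fun S hS => hS.2 x (hx S hS) y (hy S hS)

/-- The invariant set: the "pure `X₁` directions" together with points where the
coordinate `p 1` and the quantity `J(p) = 2 p₁ p₃ - p₂²` are both positive. -/
def Q3 : Set (Fin 5 → ℝ) :=
  {p | (p 1 = 0 ∧ p 2 = 0 ∧ p 3 = 0) ∨ (0 < p 1 ∧ 0 < 2 * p 1 * p 3 - (p 2) ^ 2)}

lemma gen_subset_Q3 : genSemigroup F23mul A3 ⊆ Q3 := by
  apply Set.sInter_subset_of_mem
  constructor
  · rintro p (⟨a, rfl⟩ | ⟨t, ht, rfl⟩)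
    · left
      exact ⟨rfl, rfl, rfl⟩
    · right
      constructor
      · simpa using ht
      · show (0:ℝ) < 2 * t * (t ^ 3 / 6) - (-(t^2)/2) ^ 2
        nlinarith [pow_pos ht 4]
  · rintro x (⟨h1, h2, h3⟩ | ⟨h1, hJ⟩) y (⟨k1, k2, k3⟩ | ⟨k1, kJ⟩)
    · left
      refine ⟨?_, ?_, ?_⟩ <;> simp [F23mul, h1, h2, h3, k1, k2, k3]
    · right
      constructor
      · show 0 < x 1 + y 1
        rw [h1]; simpa using k1
      · show 0 < 2 * (x 1 + y 1) * (x 3 + y 3 - x 0 * y 2 + x 0 ^ 2 * y 1 / 2)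
            - (x 2 + y 2 - x 0 * y 1) ^ 2
        rw [h1, h2, h3]
        nlinarith [kJ]
    · right
      constructor
      · show 0 < x 1 + y 1
        rw [k1]; simpa using h1
      · show 0 < 2 * (x 1 + y 1) * (x 3 + y 3 - x 0 * y 2 + x 0 ^ 2 * y 1 / 2)
            - (x 2 + y 2 - x 0 * y 1) ^ 2
        rw [k1, k2, k3]
        nlinarith [hJ]
    · right
      have hb : (0:ℝ) < x 1 + y 1 := by positivity
      refine ⟨hb, ?_⟩
      show 0 < 2 * (x 1 + y 1) * (x 3 + y 3 - x 0 * y 2 + x 0 ^ 2 * y 1 / 2)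
            - (x 2 + y 2 - x 0 * y 1) ^ 2
      nlinarith [sq_nonneg ((x 2 + x 0 * x 1) * y 1 - y 2 * x 1),
        mul_pos h1 k1, mul_pos (mul_pos h1 k1) hJ, mul_pos (mul_pos h1 k1) kJ,
        mul_pos h1 hJ, mul_pos k1 kJ, mul_pos h1 kJ, mul_pos k1 hJ]

/-- `gg n t` equals the product of `n` copies of `exp(-tX₁) * exp(t(X₁+X₂))`. -/
noncomputable def gg (n : ℕ) (t : ℝ) : Fin 5 → ℝ :=
  ![0, n * t, n * t ^ 2 / 2, n * t ^ 3 / 6,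
    -(n : ℝ) * t ^ 3 / 6 - n * ((n : ℝ) - 1) * t ^ 3 / 4]

lemma gg_one_mem {t : ℝ} (ht : 0 < t) : gg 1 t ∈ genSemigroup F23mul A3 := by
  have h1 : (![-t, 0, 0, 0, 0] : Fin 5 → ℝ) ∈ A3 := Or.inl ⟨-t, rfl⟩
  have h2 : (![t, t, -(t ^ 2) / 2, t ^ 3 / 6, t ^ 3 / 3] : Fin 5 → ℝ) ∈ A3 :=
    Or.inr ⟨t, ht, rfl⟩
  have : gg 1 t = F23mul ![-t, 0, 0, 0, 0] ![t, t, -(t ^ 2) / 2, t ^ 3 / 6, t ^ 3 / 3] := by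
    funext i
    fin_cases i <;> simp [gg, F23mul] <;> ring
  rw [this]
  exact gen_mul_mem (A3_subset_gen h1) (A3_subset_gen h2)

lemma gg_mem {t : ℝ} (ht : 0 < t) : ∀ n : ℕ, 1 ≤ n → gg n t ∈ genSemigroup F23mul A3 := by
  intro n hn
  induction n with
  | zero => omega
  | succ m ih =>
    rcases Nat.eq_or_lt_of_le hn with h | h
    · rw [← h]
      exact gg_one_mem ht
    · have hm : 1 ≤ m := by omega
      have key : gg (m + 1) t = F23mul (gg m t) (gg 1 t) := by
        funext i
        fin_cases i <;> simp [gg, F23mul] <;> push_cast <;> ring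
      rw [key]
      exact gen_mul_mem (ih hm) (gg_one_mem ht)

lemma F23_closure_part :
    (![0, 1, 0, 0, 0] : Fin 5 → ℝ) ∈ closure (genSemigroup F23mul A3) := by
  set u : ℕ → ℝ := fun n => 1 / ((n : ℝ) + 1) with hu
  set f : ℕ → (Fin 5 → ℝ) := fun n => gg (n + 1) (u n) with hfdef
  have hmem : ∀ n, f n ∈ genSemigroup F23mul A3 := by
    intro n
    exact gg_mem (by positivity) (n + 1) (by omega)
  have hf : ∀ n, f n = ![0, 1, u n / 2, (u n) ^ 2 / 6,
      -(u n) ^ 2 / 6 - (u n - (u n) ^ 2) / 4] := by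
    intro n
    have hne : ((n : ℝ) + 1) ≠ 0 := by positivity
    funext i
    fin_cases i <;>
      simp only [hfdef, gg, hu, Fin.isValue, Matrix.cons_val_zero, Matrix.cons_val_one,
        Matrix.head_cons, Matrix.cons_val_two, Matrix.tail_cons, Matrix.cons_val_three,
        Matrix.cons_val_four, Nat.cast_add, Nat.cast_one] <;>
      field_simp <;> ring
  have hu0 : Filter.Tendsto u Filter.atTop (nhds 0) :=
    tendsto_one_div_add_atTop_nhds_zero_nat
  have htend : Filter.Tendsto f Filter.atTop (nhds (![0, 1, 0, 0, 0] : Fin 5 → ℝ)) := by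
    have : Filter.Tendsto (fun n => (![0, 1, u n / 2, (u n) ^ 2 / 6,
        -(u n) ^ 2 / 6 - (u n - (u n) ^ 2) / 4] : Fin 5 → ℝ)) Filter.atTop
        (nhds (![0, 1, 0, 0, 0] : Fin 5 → ℝ)) := by
      rw [tendsto_pi_nhds]
      intro i
      fin_cases i
      · simpa using tendsto_const_nhds (x := (0:ℝ)) (f := Filter.atTop (α := ℕ))
      · simpa using tendsto_const_nhds (x := (1:ℝ)) (f := Filter.atTop (α := ℕ))
      · simpa using hu0.div_const 2
      · simpa using (hu0.pow 2).div_const 6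
      · have h1 : Filter.Tendsto (fun n => -(u n) ^ 2 / 6 - (u n - (u n) ^ 2) / 4)
            Filter.atTop (nhds (-(0:ℝ) ^ 2 / 6 - ((0:ℝ) - (0:ℝ) ^ 2) / 4)) :=
          (((hu0.pow 2).neg.div_const 6).sub ((hu0.sub (hu0.pow 2)).div_const 4))
        simpa using h1
    simpa [← hf] using this
  exact mem_closure_of_tendsto htend (Filter.Eventually.of_forall hmem)

/-- In `𝔽₂₃`, the point `exp(X₂) = (0,1,0,0,0)` belongs to the topological closure of
the semigroup `S₃` generated by `exp(W₃)`, with `W₃ = ℝX₁ ∪ ℝ₊(X₁+X₂)`, but it does not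
belong to `S₃` itself. -/
theorem F23_expX2_in_closure_not_in_semigroup :
    (![0, 1, 0, 0, 0] : Fin 5 → ℝ) ∈ closure (genSemigroup F23mul A3) ∧
    (![0, 1, 0, 0, 0] : Fin 5 → ℝ) ∉ genSemigroup F23mul A3 := by
  refine ⟨F23_closure_part, fun hmem => ?_⟩
  have hQ := gen_subset_Q3 hmem
  rcases hQ with ⟨h1, _, _⟩ | ⟨_, hJ⟩
  · norm_num at h1
  · change (0:ℝ) < 2 * 1 * 0 - 0 ^ 2 at hJ; norm_num at hJ
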